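/- Let 0<|q|<1, let a ∈ ℂ with |q|² < |a| < 1, and set b = q²/a. Suppose w is a meromorphic function on ℂ∖{0} with w(q²x) = w(x), whose only poles are simple poles at the points q^{2k}a and q^{2k}b (k ∈ ℤ), with residues A at a and B at b normalized so that A/a = 1 and B/b = −1. Then the coefficient of z^{−i−1} in the Laurent expansion of w on the annulus containing S¹ equals (a^{i+1} − q^{2i+2} a^{−i−1})/(1 − q^{2(i+1)}) for every integer i ≥ 0. -/

import Mathlib

open Complex Filter Set Metric Function intervalIntegral MeasureTheory

/-- Rotation/scaling of a circle integral around 0. -/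
lemma circleIntegral_rotate (f : ℂ → ℂ) (ρ : ℝ) (α : ℂ) :
    (∮ z in C(0, ‖α‖ * ρ), f z) = α * ∮ z in C(0, ρ), f (α * z) := by
  have key : ∀ θ : ℝ, α * circleMap 0 ρ θ
      = circleMap 0 (‖α‖ * ρ) (θ + Complex.arg α) := by
    intro θ
    rw [circleMap_zero, circleMap_zero]
    conv_lhs => rw [← Complex.norm_mul_exp_arg_mul_I α]
    rw [Complex.ofReal_mul, Complex.ofReal_add, add_mul, Complex.exp_add]
    ring
  set F : ℝ → ℂ := fun θ => deriv (circleMap 0 (‖α‖ * ρ)) θ •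
    f (circleMap 0 (‖α‖ * ρ) θ) with hF
  have hper : Function.Periodic F (2 * Real.pi) := by
    intro θ
    simp only [hF, deriv_circleMap]
    rw [periodic_circleMap]
  have h2 : (∫ θ in (0:ℝ)..2 * Real.pi, F (θ + Complex.arg α))
      = ∫ θ in (0:ℝ)..2 * Real.pi, F θ := by
    rw [intervalIntegral.integral_comp_add_right F]
    have := hper.intervalIntegral_add_eq (Complex.arg α) 0
    simpa [add_comm] using this
  calc (∮ z in C(0, ‖α‖ * ρ), f z) = ∫ θ in (0:ℝ)..2 * Real.pi, F θ := rfl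
    _ = ∫ θ in (0:ℝ)..2 * Real.pi, F (θ + Complex.arg α) := h2.symm
    _ = α * ∫ θ in (0:ℝ)..2 * Real.pi, deriv (circleMap 0 ρ) θ • f (α * circleMap 0 ρ θ) := by
        rw [← intervalIntegral.integral_const_mul]
        congr 1
        funext θ
        simp only [hF, deriv_circleMap, key θ, smul_eq_mul]
        rw [← key θ]
        ring
    _ = α * ∮ z in C(0, ρ), f (α * z) := rfl

/-- Expansion of the "inner" Cauchy integral in negative powers of `x`. -/
lemma hasSum_inner {f : ℂ → ℂ} {ρ : ℝ} {x : ℂ}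
    (hf : CircleIntegrable f 0 ρ) (h0 : 0 < ρ) (hx : ρ < ‖x‖) :
    HasSum (fun n : ℕ => (∮ z in C(0, ρ), z ^ n * f z) * x⁻¹ ^ (n + 1))
      (-∮ z in C(0, ρ), (z - x)⁻¹ * f z) := by
  have hxpos : (0:ℝ) < ‖x‖ := h0.trans hx
  have hx0 : x ≠ 0 := by
    intro h; rw [h] at hxpos; simp at hxpos
  have hρx : ρ / ‖x‖ ∈ Set.Ico (0:ℝ) 1 :=
    ⟨div_nonneg h0.le hxpos.le, (div_lt_one hxpos).2 hx⟩
  have key : HasSum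
      (fun n : ℕ => ∫ θ in (0:ℝ)..2 * Real.pi,
        (deriv (circleMap 0 ρ) θ * ((circleMap 0 ρ θ) ^ n * f (circleMap 0 ρ θ)))
          * x⁻¹ ^ (n + 1))
      (∫ θ in (0:ℝ)..2 * Real.pi,
        -(deriv (circleMap 0 ρ) θ * ((circleMap 0 ρ θ - x)⁻¹ * f (circleMap 0 ρ θ)))) := by
    refine intervalIntegral.hasSum_integral_of_dominated_convergence
      (fun n θ => ‖f (circleMap 0 ρ θ)‖ * ((ρ / ‖x‖) ^ n * (ρ / ‖x‖)))
      (fun n => ?_) (fun n => ?_) ?_ ?_ ?_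
    · simp only [deriv_circleMap]
      apply AEStronglyMeasurable.mul_const
      apply AEStronglyMeasurable.mul
      · apply Measurable.aestronglyMeasurable; fun_prop
      · apply AEStronglyMeasurable.mul
        · apply Measurable.aestronglyMeasurable; fun_prop
        · exact hf.def'.1
    · refine Eventually.of_forall fun θ _ => le_of_eq ?_
      simp only [norm_mul, deriv_circleMap, norm_pow, norm_inv]
      have h1 : ‖circleMap 0 ρ θ * I‖ = ρ := by
        simp [abs_of_pos h0]
      have h2 : ‖circleMap 0 ρ θ‖ = ρ := by
        simp [abs_of_pos h0]
      rw [norm_mul] at h1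
      rw [h2] at h1 ⊢
      have hxn : ‖x‖ = ‖x‖ := rfl
      rw [hxn]
      field_simp
      rw [Complex.norm_I]
      linear_combination (ρ ^ n * ‖f (circleMap 0 ρ θ)‖ * (1 / ‖x‖) ^ n) *
        mul_one_div_cancel hxpos.ne'
    · exact Eventually.of_forall fun θ _ =>
        (((summable_geometric_of_lt_one hρx.1 hρx.2).mul_right _).mul_left _)
    · simp_rw [tsum_mul_left, tsum_mul_right, tsum_geometric_of_lt_one hρx.1 hρx.2]
      apply IntervalIntegrable.mul_continuousOn hf.norm
      exact continuousOn_const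
    · refine Eventually.of_forall fun θ _ => ?_
      have hz : ‖circleMap 0 ρ θ * x⁻¹‖ < 1 := by
        rw [norm_mul, norm_inv]
        have h2 : ‖circleMap 0 ρ θ‖ = ρ := by simp [abs_of_pos h0]
        rw [h2]
        calc ρ * ‖x‖⁻¹ = ρ / ‖x‖ := by rw [div_eq_mul_inv]
          _ < 1 := hρx.2
      have hgeo := (hasSum_geometric_of_norm_lt_one hz).mul_left
        (deriv (circleMap 0 ρ) θ * f (circleMap 0 ρ θ))
      have hgeo2 := hgeo.mul_right x⁻¹
      have hzx : circleMap 0 ρ θ - x ≠ 0 := by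
        intro h
        have he : circleMap 0 ρ θ = x := by linear_combination h
        have := congrArg (‖·‖) he
        rw [norm_circleMap_zero, abs_of_pos h0] at this
        exact absurd this (ne_of_lt hx)
      have h1ne : (1 - circleMap 0 ρ θ * x⁻¹) ≠ 0 := by
        have hfact : (1 - circleMap 0 ρ θ * x⁻¹) = -(circleMap 0 ρ θ - x) * x⁻¹ := by
          field_simp
          ring
        rw [hfact]
        exact mul_ne_zero (neg_ne_zero.2 hzx) (inv_ne_zero hx0)
      have hval : deriv (circleMap 0 ρ) θ * f (circleMap 0 ρ θ)
            * (1 - circleMap 0 ρ θ * x⁻¹)⁻¹ * x⁻¹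
          = -(deriv (circleMap 0 ρ) θ
            * ((circleMap 0 ρ θ - x)⁻¹ * f (circleMap 0 ρ θ))) := by
        have hkey : (1 - circleMap 0 ρ θ * x⁻¹) * x = -(circleMap 0 ρ θ - x) := by
          field_simp
          ring
        rw [mul_assoc, ← mul_inv, hkey, ← neg_inv]
        ring
      convert hgeo2 using 1
      · rfl
      · funext n
        ring
      · exact hval.symm
  have lhs_eq : ∀ n : ℕ, (∮ z in C(0, ρ), z ^ n * f z) * x⁻¹ ^ (n + 1)
      = ∫ θ in (0:ℝ)..2 * Real.pi,
        (deriv (circleMap 0 ρ) θ * ((circleMap 0 ρ θ) ^ n * f (circleMap 0 ρ θ)))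
          * x⁻¹ ^ (n + 1) := by
    intro n
    rw [intervalIntegral.integral_mul_const]
    rfl
  have rhs_eq : (-∮ z in C(0, ρ), (z - x)⁻¹ * f z)
      = ∫ θ in (0:ℝ)..2 * Real.pi,
        -(deriv (circleMap 0 ρ) θ * ((circleMap 0 ρ θ - x)⁻¹ * f (circleMap 0 ρ θ))) := by
    rw [intervalIntegral.integral_neg]
    rfl
  rw [rhs_eq]
  exact (funext lhs_eq : _) ▸ key

/-- Near a simple pole with residue `A`, the function minus its principal part is
little-o of `(z-p)⁻¹`. -/
lemma isLittleO_residue {g : ℂ → ℂ} {p A : ℂ} {G : ℂ → ℂ}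
    (hG : ∀ᶠ z in nhdsWithin p {p}ᶜ, G z = g z - A * (z - p)⁻¹)
    (hg : Tendsto (fun z => (z - p) * g z) (nhdsWithin p {p}ᶜ) (nhds A)) :
    (fun z => G z - G p) =o[nhdsWithin p {p}ᶜ] fun z => (z - p)⁻¹ := by
  rw [Asymptotics.isLittleO_iff_tendsto fun z hz => ?zero]
  case zero =>
    rw [inv_eq_zero, sub_eq_zero] at hz
    rw [hz, sub_self]
  have hev : ∀ᶠ z in nhdsWithin p {p}ᶜ,
      ((z - p) * g z - A) - G p * (z - p) = (G z - G p) / (z - p)⁻¹ := by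
    filter_upwards [hG, self_mem_nhdsWithin] with z hz hzp
    have hne : z - p ≠ 0 := sub_ne_zero.2 hzp
    rw [div_inv_eq_mul, hz]
    field_simp
  refine Tendsto.congr' hev ?_
  have h1 : Tendsto (fun z : ℂ => G p * (z - p)) (nhdsWithin p {p}ᶜ) (nhds 0) := by
    have : Tendsto (fun z : ℂ => G p * (z - p)) (nhds p) (nhds (G p * (p - p))) := by
      apply Tendsto.const_mul
      exact (continuous_id.sub continuous_const).tendsto p
    rw [sub_self, mul_zero] at this
    exact this.mono_left nhdsWithin_le_nhds
  have := (hg.sub_const A).sub h1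
  simpa using this

/-- The integral of `(z - p)⁻¹` over a circle not enclosing `p` vanishes. -/
lemma circleIntegral_inv_of_outside {p : ℂ} {ℓ : ℝ} (h0 : 0 ≤ ℓ)
    (hp : ℓ < ‖p‖) : (∮ z in C(0, ℓ), (z - p)⁻¹) = 0 := by
  apply circleIntegral_eq_zero_of_differentiable_on_off_countable h0 countable_empty
  · refine ContinuousOn.inv₀ (by fun_prop) fun z hz => ?_
    rw [mem_closedBall_zero_iff] at hz
    refine sub_ne_zero.2 fun hzx => ?_
    rw [hzx] at hz
    exact absurd hz (not_le.2 hp)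
  · intro z hz
    refine DifferentiableAt.inv (by fun_prop) ?_
    rw [mem_diff, mem_ball_zero_iff] at hz
    refine sub_ne_zero.2 fun hzx => ?_
    rw [hzx] at hz
    exact absurd hz.1.le (not_le.2 hp)

/-- Cauchy integral formula on an annulus centered at 0. -/
lemma two_circle_cauchy {w : ℂ → ℂ} {ρ R : ℝ} {x : ℂ} (h0 : 0 < ρ) (hρR : ρ ≤ R)
    (hd : ∀ z : ℂ, z ∈ closedBall (0:ℂ) R \ ball (0:ℂ) ρ → DifferentiableAt ℂ w z)
    (hx1 : ρ < ‖x‖) (hx2 : ‖x‖ < R) :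
    (∮ z in C(0, R), (z - x)⁻¹ * w z) - (∮ z in C(0, ρ), (z - x)⁻¹ * w z)
      = (2 * Real.pi * I) * w x := by
  set A : Set ℂ := closedBall (0:ℂ) R \ ball (0:ℂ) ρ with hA
  have hRpos : 0 < R := h0.trans_le hρR
  have hxA : A ∈ nhds x := by
    rw [_root_.mem_nhds_iff]
    refine ⟨ball (0:ℂ) R \ closedBall (0:ℂ) ρ,
      diff_subset_diff ball_subset_closedBall ball_subset_closedBall,
      isOpen_ball.sdiff Metric.isClosed_closedBall, ?_⟩
    simp only [mem_diff, mem_ball_zero_iff, mem_closedBall_zero_iff]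
    exact ⟨hx2, not_le.2 hx1⟩
  have hdOn : DifferentiableOn ℂ w A := fun z hz => (hd z hz).differentiableWithinAt
  have hF : DifferentiableOn ℂ (dslope w x) A := (differentiableOn_dslope hxA).2 hdOn
  have heq : (∮ z in C(0, R), dslope w x z) = ∮ z in C(0, ρ), dslope w x z := by
    refine circleIntegral_eq_of_differentiable_on_annulus_off_countable h0 hρR
      countable_empty hF.continuousOn fun z hz => ?_
    have hzA : A ∈ nhds z := by
      rw [_root_.mem_nhds_iff]
      exact ⟨ball (0:ℂ) R \ closedBall (0:ℂ) ρ,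
        diff_subset_diff ball_subset_closedBall ball_subset_closedBall,
        isOpen_ball.sdiff Metric.isClosed_closedBall, hz.1⟩
    exact hF.differentiableAt hzA
  -- points on either circle are distinct from x
  have hsphere : ∀ r : ℝ, 0 < r → r ≠ ‖x‖ → ∀ z ∈ sphere (0:ℂ) r, z ≠ x := by
    intro r hr hne z hz hzx
    rw [mem_sphere_zero_iff_norm] at hz
    exact hne (by rw [← hz, hzx])
  have hwc : ContinuousOn w A := fun z hz => ((hd z hz).continuousAt).continuousWithinAt
  have hsub : ∀ r : ℝ, 0 < r → ρ ≤ r → r ≤ R → sphere (0:ℂ) r ⊆ A := by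
    intro r hr h1 h2 z hz
    rw [mem_sphere_zero_iff_norm] at hz
    constructor
    · rw [mem_closedBall_zero_iff, hz]; exact h2
    · rw [mem_ball_zero_iff, hz]; exact not_lt.2 h1
  -- rewrite dslope integrals
  have hev : ∀ r : ℝ, 0 < r → ρ ≤ r → r ≤ R → r ≠ ‖x‖ →
      (∮ z in C(0, r), dslope w x z)
        = (∮ z in C(0, r), (z - x)⁻¹ * w z) - (∮ z in C(0, r), (z - x)⁻¹) * w x := by
    intro r hr h1 h2 hne
    have e1 : (∮ z in C(0, r), dslope w x z)
        = ∮ z in C(0, r), ((z - x)⁻¹ * w z - (z - x)⁻¹ * w x) := by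
      refine circleIntegral.integral_congr hr.le fun z hz => ?_
      have hzx : z ≠ x := hsphere r hr hne z hz
      rw [dslope_of_ne w hzx, slope_def_field]
      rw [div_eq_inv_mul]
      ring
    rw [e1]
    have hint1 : CircleIntegrable (fun z => (z - x)⁻¹ * w z) 0 r := by
      apply ContinuousOn.circleIntegrable hr.le
      refine ContinuousOn.mul ?_ (hwc.mono (hsub r hr h1 h2))
      refine ContinuousOn.inv₀ (by fun_prop) fun z hz => ?_
      exact sub_ne_zero.2 (hsphere r hr hne z hz)
    have hint2 : CircleIntegrable (fun z => (z - x)⁻¹ * w x) 0 r := by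
      apply ContinuousOn.circleIntegrable hr.le
      refine ContinuousOn.mul ?_ continuousOn_const
      refine ContinuousOn.inv₀ (by fun_prop) fun z hz => ?_
      exact sub_ne_zero.2 (hsphere r hr hne z hz)
    rw [circleIntegral.integral_sub hint1 hint2]
    congr 1
    have := circleIntegral.integral_smul_const (fun z => (z - x)⁻¹) (w x) 0 r
    simpa [smul_eq_mul] using this
  have hR1 : (∮ z in C(0, R), (z - x)⁻¹) = 2 * Real.pi * I := by
    apply circleIntegral.integral_sub_inv_of_mem_ball
    rw [mem_ball_zero_iff]
    exact hx2
  have hρ1 : (∮ z in C(0, ρ), (z - x)⁻¹) = 0 := by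
    apply circleIntegral_eq_zero_of_differentiable_on_off_countable h0.le countable_empty
    · refine ContinuousOn.inv₀ (by fun_prop) fun z hz => ?_
      rw [mem_closedBall_zero_iff] at hz
      refine sub_ne_zero.2 fun hzx => ?_
      rw [hzx] at hz
      exact absurd hz (not_le.2 hx1)
    · intro z hz
      refine DifferentiableAt.inv (by fun_prop) ?_
      rw [mem_diff, mem_ball_zero_iff] at hz
      refine sub_ne_zero.2 fun hzx => ?_
      rw [hzx] at hz
      exact absurd hz.1.le (not_le.2 hx1)
  have h1 := hev R hRpos hρR le_rfl (ne_of_gt hx2)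
  have h2 := hev ρ h0 le_rfl hρR (ne_of_lt hx1)
  rw [h1, h2, hR1, hρ1] at heq
  linear_combination heq

/-- The candidate Laurent coefficients, defined by contour integrals. -/
noncomputable def laurentCoeff (w : ℂ → ℂ) (ρi ρo : ℝ) : ℤ → ℂ := fun k =>
  if 0 ≤ k then (2 * Real.pi * Complex.I : ℂ)⁻¹ * ∮ z in C(0, ρo), (z⁻¹) ^ k.toNat * (z⁻¹ * w z)
  else (2 * Real.pi * Complex.I : ℂ)⁻¹ * ∮ z in C(0, ρi), z ^ (-k - 1).toNat * w z

lemma laurentCoeff_nat (w : ℂ → ℂ) (ρi ρo : ℝ) (n : ℕ) :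
    laurentCoeff w ρi ρo n
      = (2 * Real.pi * Complex.I : ℂ)⁻¹ * ∮ z in C(0, ρo), (z⁻¹) ^ n * (z⁻¹ * w z) := by
  rw [laurentCoeff, if_pos (Int.natCast_nonneg n), Int.toNat_natCast]

lemma laurentCoeff_neg (w : ℂ → ℂ) (ρi ρo : ℝ) (n : ℕ) :
    laurentCoeff w ρi ρo (-((n : ℤ) + 1))
      = (2 * Real.pi * Complex.I : ℂ)⁻¹ * ∮ z in C(0, ρi), z ^ n * w z := by
  have h1 : ¬ (0 : ℤ) ≤ -((n : ℤ) + 1) := by omega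
  have h2 : (-(-((n : ℤ) + 1)) - 1).toNat = n := by omega
  rw [laurentCoeff, if_neg h1, h2]

set_option maxHeartbeats 1000000 in
/-- The Laurent coefficients on the unit circle of the quasi-periodic meromorphic
function `w` with simple poles at `q^{2k}a`, `q^{2k}b` and residues `a` at `a`,
`−b` at `b` (i.e. normalized so that `A/a = 1`, `B/b = −1`). -/
theorem laurent_coefficients_of_w (q a : ℂ) (hq0 : 0 < ‖q‖)
    (hq1 : ‖q‖ < 1) (ha1 : ‖q‖ ^ 2 < ‖a‖)
    (ha2 : ‖a‖ < 1) (b : ℂ) (hb : b = q ^ 2 / a)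
    (w : ℂ → ℂ)
    (hperiod : ∀ x : ℂ, x ≠ 0 → w (q ^ 2 * x) = w x)
    (hanal : ∀ x : ℂ, x ≠ 0 → (∀ k : ℤ, x ≠ q ^ (2 * k) * a ∧ x ≠ q ^ (2 * k) * b) →
      AnalyticAt ℂ w x)
    (hpole_a : Filter.Tendsto (fun x => (x - a) * w x) (nhdsWithin a {a}ᶜ) (nhds a))
    (hpole_b : Filter.Tendsto (fun x => (x - b) * w x) (nhdsWithin b {b}ᶜ) (nhds (-b))) :
    ∃ c : ℤ → ℂ,
      (∀ x : ℂ, ‖x‖ = 1 → HasSum (fun k : ℤ => c k * x ^ k) (w x)) ∧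
      ∀ i : ℕ, c (-(i : ℤ) - 1) =
        (a ^ ((i : ℤ) + 1) - q ^ (2 * (i : ℤ) + 2) * a ^ (-(i : ℤ) - 1)) /
          (1 - q ^ (2 * ((i : ℤ) + 1))) := by
  -- basic notation and numeric facts
  set r : ℝ := ‖q‖ with hrdef
  have hr0 : 0 < r := hq0
  have hr1 : r < 1 := hq1
  have hr2pos : (0:ℝ) < r ^ 2 := by positivity
  have hr2lt1 : r ^ 2 < 1 := by nlinarith
  have hq : q ≠ 0 := norm_ne_zero_iff.mp hq0.ne'
  have hapos : 0 < ‖a‖ := hr2pos.trans ha1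
  have ha0 : a ≠ 0 := norm_ne_zero_iff.mp hapos.ne'
  have hb_abs : ‖b‖ = r ^ 2 / ‖a‖ := by
    rw [hb, norm_div, norm_pow, hrdef]
  have hb1 : r ^ 2 < ‖b‖ := by
    rw [hb_abs, lt_div_iff₀ hapos]; nlinarith
  have hb2 : ‖b‖ < 1 := by
    rw [hb_abs, div_lt_one hapos]; exact ha1
  have hbpos : 0 < ‖b‖ := hr2pos.trans hb1
  have hb0 : b ≠ 0 := norm_ne_zero_iff.mp hbpos.ne'
  have hab : a ≠ b := by
    intro h
    have h2 : Filter.Tendsto (fun x => (x - a) * w x) (nhdsWithin a {a}ᶜ) (nhds (-a)) := by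
      rw [h] at *; exact hpole_b
    have h3 : a = -a := tendsto_nhds_unique hpole_a h2
    have h4 : a + a = 0 := by linear_combination h3
    exact ha0 (add_self_eq_zero.mp h4)
  set m1 : ℝ := max ‖a‖ ‖b‖ with hm1def
  set m2 : ℝ := min ‖a‖ ‖b‖ / r ^ 2 with hm2def
  have hm1a : ‖a‖ ≤ m1 := le_max_left _ _
  have hm1b : ‖b‖ ≤ m1 := le_max_right _ _
  have hm1pos : 0 < m1 := hapos.trans_le hm1a
  have hm1lt1 : m1 < 1 := max_lt ha2 hb2
  have hminpos : 0 < min ‖a‖ ‖b‖ := lt_min hapos hbpos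
  have hr2min : r ^ 2 < min ‖a‖ ‖b‖ := lt_min ha1 hb1
  have hm2gt1 : 1 < m2 := by
    rw [hm2def, lt_div_iff₀ hr2pos]; nlinarith
  have hm2a : m2 ≤ ‖a‖ / r ^ 2 := by
    rw [hm2def]; gcongr; exact min_le_left _ _
  have hm2b : m2 ≤ ‖b‖ / r ^ 2 := by
    rw [hm2def]; gcongr; exact min_le_right _ _
  set ρi : ℝ := (m1 + 1) / 2 with hρidef
  set ρo : ℝ := (1 + m2) / 2 with hρodef
  set ρ2 : ℝ := r ^ 2 * ρi with hρ2def
  have hρi1 : m1 < ρi := by rw [hρidef]; linarith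
  have hρi2 : ρi < 1 := by rw [hρidef]; linarith
  have hρipos : 0 < ρi := hm1pos.trans hρi1
  have hρo1 : 1 < ρo := by rw [hρodef]; linarith
  have hρo2 : ρo < m2 := by rw [hρodef]; linarith
  have hρopos : 0 < ρo := by linarith
  have hρ2pos : 0 < ρ2 := by rw [hρ2def]; positivity
  have hρ2r2 : ρ2 < r ^ 2 := by rw [hρ2def]; nlinarith
  have hρ2i : ρ2 ≤ ρi := by rw [hρ2def]; nlinarith
  have hr2m1pos : 0 < r ^ 2 * m1 := by positivity
  have hr2m1 : r ^ 2 * m1 < r ^ 2 := by nlinarith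
  have hρ2low : r ^ 2 * m1 < ρ2 := by rw [hρ2def]; nlinarith
  -- powers of r
  have hpow_le : ∀ n : ℕ, 1 ≤ n → r ^ (2 * n) ≤ r ^ 2 :=
    fun n hn => pow_le_pow_of_le_one hr0.le hr1.le (by omega)
  -- exclusion of poles in the fundamental annulus
  have hpole_mod : ∀ p : ℂ, min ‖a‖ ‖b‖ ≤ ‖p‖ →
      ‖p‖ ≤ m1 → ∀ (k : ℤ) (z : ℂ), z = q ^ (2 * k) * p →
      r ^ 2 * m1 < ‖z‖ → ‖z‖ < m2 → z = p := by
    intro p hpmin hpm1 k z hz h1 h2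
    have hppos : 0 < ‖p‖ := hminpos.trans_le hpmin
    obtain ⟨n, rfl | rfl⟩ := k.eq_nat_or_neg
    · have hcast : (2 * (n : ℤ)) = ((2 * n : ℕ) : ℤ) := by push_cast; ring
      have hmod : ‖z‖ = r ^ (2 * n) * ‖p‖ := by
        rw [hz, norm_mul, hcast, zpow_natCast, norm_pow, hrdef]
      rcases Nat.eq_zero_or_pos n with hn0 | hn1
      · subst hn0; simpa using hz
      · exfalso
        have h3 : r ^ (2 * n) * ‖p‖ ≤ r ^ 2 * m1 :=
          mul_le_mul (hpow_le n hn1) hpm1 hppos.le (by positivity)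
        rw [hmod] at h1; linarith
    · have hcast : q ^ (2 * -(n : ℤ)) = (q ^ (2 * n))⁻¹ := by
        rw [show (2 * -(n : ℤ)) = -((2 * n : ℕ) : ℤ) by push_cast; ring, zpow_neg, zpow_natCast]
      have hmod : ‖z‖ = ‖p‖ / r ^ (2 * n) := by
        rw [hz, norm_mul, hcast, norm_inv, norm_pow, hrdef, div_eq_mul_inv, mul_comm]
      rcases Nat.eq_zero_or_pos n with hn0 | hn1
      · subst hn0; simpa using hz
      · exfalso
        have e1 : r ^ (2 * n) ≤ r ^ 2 := hpow_le n hn1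
        have e2 : (0:ℝ) < r ^ (2 * n) := by positivity
        have h3 : m2 ≤ ‖p‖ / r ^ (2 * n) := by
          rw [hm2def]; gcongr
        rw [hmod] at h2; linarith
  -- w is analytic away from the poles in the annulus r²m1 < |z| < m2, z ≠ a, b
  have hnopole : ∀ z : ℂ, r ^ 2 * m1 < ‖z‖ → ‖z‖ < m2 →
      z ≠ a → z ≠ b → AnalyticAt ℂ w z := by
    intro z h1 h2 hza hzb
    refine hanal z ?_ fun k => ⟨?_, ?_⟩
    · intro h; rw [h] at h1; simp at h1; linarith
    · intro hzk
      exact hza (hpole_mod a (min_le_left _ _) hm1a k z hzk h1 h2)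
    · intro hzk
      exact hzb (hpole_mod b (min_le_right _ _) hm1b k z hzk h1 h2)
  -- continuity of w on circles avoiding the poles
  have hcont : ∀ ℓ : ℝ, r ^ 2 * m1 < ℓ → ℓ < m2 → ℓ ≠ ‖a‖ → ℓ ≠ ‖b‖ →
      ContinuousOn w (sphere (0:ℂ) ℓ) := by
    intro ℓ h1 h2 h3 h4 z hz
    rw [mem_sphere_zero_iff_norm] at hz
    have hz' : ‖z‖ = ℓ := hz
    have hza : z ≠ a := by intro h; rw [h] at hz'; exact h3 hz'.symm
    have hzb : z ≠ b := by intro h; rw [h] at hz'; exact h4 hz'.symm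
    exact ((hnopole z (hz' ▸ h1) (hz' ▸ h2) hza hzb).continuousAt).continuousWithinAt
  -- radius facts
  have hρi_facts : r ^ 2 * m1 < ρi ∧ ρi < m2 ∧ ρi ≠ ‖a‖ ∧ ρi ≠ ‖b‖ :=
    ⟨by linarith, by linarith, by intro h; rw [← h] at hm1a; linarith,
      by intro h; rw [← h] at hm1b; linarith⟩
  have hρo_facts : r ^ 2 * m1 < ρo ∧ ρo < m2 ∧ ρo ≠ ‖a‖ ∧ ρo ≠ ‖b‖ :=
    ⟨by linarith, hρo2, by intro h; rw [← h] at ha2; linarith,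
      by intro h; rw [← h] at hb2; linarith⟩
  have hρ2_facts : r ^ 2 * m1 < ρ2 ∧ ρ2 < m2 ∧ ρ2 ≠ ‖a‖ ∧ ρ2 ≠ ‖b‖ :=
    ⟨hρ2low, by linarith, by intro h; rw [← h] at ha1; linarith,
      by intro h; rw [← h] at hb1; linarith⟩
  have hCIi : CircleIntegrable w 0 ρi :=
    (hcont ρi hρi_facts.1 hρi_facts.2.1 hρi_facts.2.2.1 hρi_facts.2.2.2).circleIntegrable
      hρipos.le
  have hCIo : CircleIntegrable w 0 ρo :=
    (hcont ρo hρo_facts.1 hρo_facts.2.1 hρo_facts.2.2.1 hρo_facts.2.2.2).circleIntegrable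
      hρopos.le
  have h2πI : (2 * Real.pi * Complex.I : ℂ) ≠ 0 := by
    simp [Real.pi_ne_zero, Complex.I_ne_zero]
  refine ⟨laurentCoeff w ρi ρo, ?_, ?_⟩
  · -- the Laurent expansion on the unit circle
    intro x hx
    have hx_in : ρi < ‖x‖ := by rw [hx]; exact hρi2
    have hx_out : ‖x‖ < ρo := by rw [hx]; exact hρo1
    -- outer part
    have hOut := hasSum_two_pi_I_cauchyPowerSeries_integral (f := w) (c := 0) hCIo hx_out
    simp only [sub_zero, zero_add, smul_eq_mul] at hOut
    have hterm : ∀ n : ℕ, (∮ z in C(0, ρo), (x / z) ^ n * (z⁻¹ * w z))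
        = x ^ n * ∮ z in C(0, ρo), (z⁻¹) ^ n * (z⁻¹ * w z) := by
      intro n
      rw [← smul_eq_mul (a := x ^ n), ← circleIntegral.integral_smul]
      refine circleIntegral.integral_congr hρopos.le fun z hz => ?_
      simp only [smul_eq_mul]
      rw [div_eq_mul_inv, mul_pow]
      ring
    simp only [hterm] at hOut
    have hOut' := hOut.mul_left ((2 * Real.pi * Complex.I : ℂ)⁻¹)
    -- inner part
    have hIn := hasSum_inner hCIi hρipos hx_in
    have hIn' := hIn.mul_left ((2 * Real.pi * Complex.I : ℂ)⁻¹)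
    have hnat : HasSum (fun n : ℕ => laurentCoeff w ρi ρo (n : ℤ) * x ^ ((n : ℤ)))
        ((2 * Real.pi * Complex.I : ℂ)⁻¹ * ∮ z in C(0, ρo), (z - x)⁻¹ * w z) := by
      convert hOut' using 1
      rfl
      funext n
      rw [laurentCoeff_nat, zpow_natCast]
      ring
    have hneg : HasSum (fun n : ℕ => laurentCoeff w ρi ρo (-((n : ℤ) + 1))
          * x ^ (-((n : ℤ) + 1)))
        ((2 * Real.pi * Complex.I : ℂ)⁻¹ * -∮ z in C(0, ρi), (z - x)⁻¹ * w z) := by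
      convert hIn' using 1
      rfl
      funext n
      rw [laurentCoeff_neg]
      have hzp : x ^ (-((n : ℤ) + 1)) = x⁻¹ ^ (n + 1) := by
        rw [show (-((n : ℤ) + 1)) = -(((n + 1 : ℕ)) : ℤ) by push_cast; ring,
          zpow_neg, zpow_natCast, ← inv_pow]
      rw [hzp]
      ring
    have hsum := HasSum.of_nat_of_neg_add_one
      (f := fun k : ℤ => laurentCoeff w ρi ρo k * x ^ k) hnat hneg
    -- two-circle Cauchy formula
    have hdann : ∀ z : ℂ, z ∈ closedBall (0:ℂ) ρo \ ball (0:ℂ) ρi → DifferentiableAt ℂ w z := by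
      intro z hz
      rw [mem_diff, mem_closedBall_zero_iff, mem_ball_zero_iff, not_lt] at hz
      have h1 : ‖z‖ ≤ ρo := hz.1
      have h2 : ρi ≤ ‖z‖ := hz.2
      have hza : z ≠ a := by
        intro h; rw [h] at h2; linarith
      have hzb : z ≠ b := by
        intro h; rw [h] at h2; linarith
      exact (hnopole z (by linarith) (by linarith) hza hzb).differentiableAt
    have htc := two_circle_cauchy hρipos (by linarith) hdann hx_in hx_out
    have hval : (2 * Real.pi * Complex.I : ℂ)⁻¹ * (∮ z in C(0, ρo), (z - x)⁻¹ * w z)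
        + (2 * Real.pi * Complex.I : ℂ)⁻¹ * -(∮ z in C(0, ρi), (z - x)⁻¹ * w z) = w x := by
      calc (2 * Real.pi * Complex.I : ℂ)⁻¹ * (∮ z in C(0, ρo), (z - x)⁻¹ * w z)
            + (2 * Real.pi * Complex.I : ℂ)⁻¹ * -(∮ z in C(0, ρi), (z - x)⁻¹ * w z)
          = (2 * Real.pi * Complex.I : ℂ)⁻¹ * ((∮ z in C(0, ρo), (z - x)⁻¹ * w z)
            - (∮ z in C(0, ρi), (z - x)⁻¹ * w z)) := by ring
        _ = (2 * Real.pi * Complex.I : ℂ)⁻¹ * (2 * Real.pi * Complex.I * w x) := by rw [htc]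
        _ = w x := by rw [← mul_assoc, inv_mul_cancel₀ h2πI, one_mul]
    rw [← hval]
    exact hsum
  · -- evaluation of negative coefficients
    intro i
    have hkey : laurentCoeff w ρi ρo (-(i : ℤ) - 1)
        = (2 * Real.pi * Complex.I : ℂ)⁻¹ * ∮ z in C(0, ρi), z ^ i * w z := by
      rw [show (-(i : ℤ) - 1) = -((i : ℤ) + 1) by ring, laurentCoeff_neg]
    rw [hkey]
    set J : ℂ := ∮ z in C(0, ρi), z ^ i * w z with hJdef
    -- the pole-free open region containing the annulus and the two poles
    set U : Set ℂ := {z : ℂ | r ^ 2 * m1 < ‖z‖ ∧ ‖z‖ < m2} with hUdef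
    have hUopen : IsOpen U := by
      have : U = (‖·‖) ⁻¹' (Set.Ioo (r ^ 2 * m1) m2) := by
        ext z; simp [hUdef, Set.mem_Ioo, and_comm]
      rw [this]
      exact isOpen_Ioo.preimage continuous_norm
    have haU : a ∈ U := by
      rw [hUdef]
      exact ⟨by linarith, by linarith⟩
    have hbU : b ∈ U := by
      rw [hUdef]
      exact ⟨by linarith, by linarith⟩
    set G : ℂ → ℂ :=
      fun z => z ^ i * w z - a ^ (i + 1) * (z - a)⁻¹ + b ^ (i + 1) * (z - b)⁻¹ with hGdef
    have hGd : DifferentiableOn ℂ G (U \ {a, b}) := by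
      rintro z ⟨⟨h1, h2⟩, hz2⟩
      simp only [Set.mem_insert_iff, Set.mem_singleton_iff, not_or] at hz2
      obtain ⟨hza, hzb⟩ := hz2
      apply DifferentiableAt.differentiableWithinAt
      apply DifferentiableAt.add
      apply DifferentiableAt.sub
      · exact (differentiable_pow i).differentiableAt.mul
          (hnopole z h1 h2 hza hzb).differentiableAt
      · exact (differentiableAt_const _).mul
          ((differentiableAt_id.sub_const a).inv (sub_ne_zero.2 hza))
      · exact (differentiableAt_const _).mul
          ((differentiableAt_id.sub_const b).inv (sub_ne_zero.2 hzb))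
    -- little-o at a
    have hoa : (fun z => G z - G a) =o[nhdsWithin a {a}ᶜ] fun z => (z - a)⁻¹ := by
      apply isLittleO_residue
        (g := fun z => z ^ i * w z + b ^ (i + 1) * (z - b)⁻¹) (A := a ^ (i + 1))
      · refine Eventually.of_forall fun z => ?_
        simp only [hGdef]
        ring
      · have t1 : Tendsto (fun z : ℂ => z ^ i * ((z - a) * w z)) (nhdsWithin a {a}ᶜ)
            (nhds (a ^ i * a)) :=
          Tendsto.mul (((continuous_pow i).tendsto a).mono_left nhdsWithin_le_nhds) hpole_a
        have t2 : Tendsto (fun z : ℂ => (z - a) * (b ^ (i + 1) * (z - b)⁻¹))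
            (nhdsWithin a {a}ᶜ) (nhds 0) := by
          have hc : ContinuousAt (fun z : ℂ => (z - a) * (b ^ (i + 1) * (z - b)⁻¹)) a := by
            exact (continuousAt_id.sub continuousAt_const).mul
              (continuousAt_const.mul
                (((continuousAt_id.sub continuousAt_const)).inv₀
                  (sub_ne_zero.2 hab)))
          have h5 : Tendsto (fun z : ℂ => (z - a) * (b ^ (i + 1) * (z - b)⁻¹))
              (nhdsWithin a {a}ᶜ) (nhds ((a - a) * (b ^ (i + 1) * (a - b)⁻¹))) :=
            hc.tendsto.mono_left nhdsWithin_le_nhds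
          simpa using h5
        have h3 := t1.add t2
        rw [add_zero] at h3
        have h4 : Tendsto (fun z : ℂ => (z - a) * (z ^ i * w z + b ^ (i + 1) * (z - b)⁻¹))
            (nhdsWithin a {a}ᶜ) (nhds (a ^ i * a)) :=
          Tendsto.congr (fun z => by ring) h3
        rwa [← pow_succ] at h4
    have hsa : U \ {a, b} ∈ nhdsWithin a {a}ᶜ := by
      refine mem_nhdsWithin.2 ⟨U ∩ {b}ᶜ, hUopen.inter isOpen_compl_singleton, ⟨haU, hab⟩, ?_⟩
      rintro z ⟨⟨hzU, hzb⟩, hza⟩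
      refine ⟨hzU, ?_⟩
      simp only [Set.mem_insert_iff, Set.mem_singleton_iff, not_or]
      exact ⟨hza, hzb⟩
    set G1 : ℂ → ℂ := Function.update G a (limUnder (nhdsWithin a {a}ᶜ) G) with hG1def
    have hG1d : DifferentiableOn ℂ G1 (insert a (U \ {a, b})) := by
      rw [hG1def]
      exact differentiableOn_update_limUnder_insert_of_isLittleO hsa hGd hoa
    -- little-o at b for the updated function
    have hG1eq : ∀ᶠ z in nhdsWithin b {b}ᶜ,
        G1 z = (fun z => z ^ i * w z - a ^ (i + 1) * (z - a)⁻¹) z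
          - (-b ^ (i + 1)) * (z - b)⁻¹ := by
      have hev : ∀ᶠ z in nhdsWithin b {b}ᶜ, z ≠ a :=
        (eventually_ne_nhds hab.symm).filter_mono nhdsWithin_le_nhds
      filter_upwards [hev] with z hza
      rw [hG1def, Function.update_of_ne hza, hGdef]
      ring
    have hob : (fun z => G1 z - G1 b) =o[nhdsWithin b {b}ᶜ] fun z => (z - b)⁻¹ := by
      apply isLittleO_residue hG1eq
      have t1 : Tendsto (fun z : ℂ => z ^ i * ((z - b) * w z)) (nhdsWithin b {b}ᶜ)
          (nhds (b ^ i * (-b))) :=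
        Tendsto.mul (((continuous_pow i).tendsto b).mono_left nhdsWithin_le_nhds) hpole_b
      have t2 : Tendsto (fun z : ℂ => (z - b) * (a ^ (i + 1) * (z - a)⁻¹))
          (nhdsWithin b {b}ᶜ) (nhds 0) := by
        have hc : ContinuousAt (fun z : ℂ => (z - b) * (a ^ (i + 1) * (z - a)⁻¹)) b :=
          (continuousAt_id.sub continuousAt_const).mul
            (continuousAt_const.mul
              ((continuousAt_id.sub continuousAt_const).inv₀ (sub_ne_zero.2 hab.symm)))
        have h5 : Tendsto (fun z : ℂ => (z - b) * (a ^ (i + 1) * (z - a)⁻¹))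
            (nhdsWithin b {b}ᶜ) (nhds ((b - b) * (a ^ (i + 1) * (b - a)⁻¹))) :=
          hc.tendsto.mono_left nhdsWithin_le_nhds
        simpa using h5
      have h3 := t1.sub t2
      rw [sub_zero] at h3
      have h4 : Tendsto (fun z : ℂ => (z - b) * (z ^ i * w z - a ^ (i + 1) * (z - a)⁻¹))
          (nhdsWithin b {b}ᶜ) (nhds (b ^ i * (-b))) :=
        Tendsto.congr (fun z => by ring) h3
      have hv : b ^ i * (-b) = -b ^ (i + 1) := by ring
      rwa [hv] at h4
    have hsb : insert a (U \ {a, b}) ∈ nhdsWithin b {b}ᶜ := by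
      refine mem_nhdsWithin.2 ⟨U, hUopen, hbU, ?_⟩
      rintro z ⟨hzU, hzb⟩
      rcases eq_or_ne z a with rfl | hza
      · exact Set.mem_insert _ _
      · refine Set.mem_insert_of_mem _ ⟨hzU, ?_⟩
        simp only [Set.mem_insert_iff, Set.mem_singleton_iff, not_or]
        exact ⟨hza, hzb⟩
    set G2 : ℂ → ℂ := Function.update G1 b (limUnder (nhdsWithin b {b}ᶜ) G1) with hG2def
    have hG2d : DifferentiableOn ℂ G2 (insert b (insert a (U \ {a, b}))) := by
      rw [hG2def]
      exact differentiableOn_update_limUnder_insert_of_isLittleO hsb hG1d hob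
    have hUsub : U ⊆ insert b (insert a (U \ {a, b})) := by
      intro z hz
      rcases eq_or_ne z b with rfl | hzb
      · exact Set.mem_insert _ _
      rcases eq_or_ne z a with rfl | hza
      · exact Set.mem_insert_of_mem _ (Set.mem_insert _ _)
      · refine Set.mem_insert_of_mem _ (Set.mem_insert_of_mem _ ⟨hz, ?_⟩)
        simp only [Set.mem_insert_iff, Set.mem_singleton_iff, not_or]
        exact ⟨hza, hzb⟩
    have hG2U : DifferentiableOn ℂ G2 U := hG2d.mono hUsub
    -- the annulus between the two circles lies in U
    have hannsub : closedBall (0:ℂ) ρi \ ball (0:ℂ) ρ2 ⊆ U := by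
      intro z hz
      rw [Set.mem_diff, mem_closedBall_zero_iff, mem_ball_zero_iff, not_lt] at hz
      have h1 : ‖z‖ ≤ ρi := hz.1
      have h2 : ρ2 ≤ ‖z‖ := hz.2
      rw [hUdef]
      exact ⟨by linarith, by linarith⟩
    have hann : (∮ z in C(0, ρi), G2 z) = ∮ z in C(0, ρ2), G2 z := by
      refine circleIntegral_eq_of_differentiable_on_annulus_off_countable hρ2pos hρ2i
        countable_empty (hG2U.continuousOn.mono hannsub) fun z hz => ?_
      have hzU : z ∈ U := hannsub
        (diff_subset_diff ball_subset_closedBall ball_subset_closedBall hz.1)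
      exact hG2U.differentiableAt (hUopen.mem_nhds hzU)
    have hGG2 : ∀ ℓ : ℝ, 0 ≤ ℓ → ℓ ≠ ‖a‖ → ℓ ≠ ‖b‖ →
        (∮ z in C(0, ℓ), G2 z) = ∮ z in C(0, ℓ), G z := by
      intro ℓ h0 hℓa hℓb
      refine circleIntegral.integral_congr h0 fun z hz => ?_
      rw [mem_sphere_zero_iff_norm] at hz
      have hza : z ≠ a := fun h => hℓa (by rw [h] at hz; exact hz.symm)
      have hzb : z ≠ b := fun h => hℓb (by rw [h] at hz; exact hz.symm)
      rw [hG2def, Function.update_of_ne hzb, hG1def, Function.update_of_ne hza]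
    -- splitting the contour integral of G
    have hsplit : ∀ ℓ : ℝ, 0 < ℓ → r ^ 2 * m1 < ℓ → ℓ < m2 →
        ℓ ≠ ‖a‖ → ℓ ≠ ‖b‖ →
        (∮ z in C(0, ℓ), G z) = (∮ z in C(0, ℓ), z ^ i * w z)
          - a ^ (i + 1) * (∮ z in C(0, ℓ), (z - a)⁻¹)
          + b ^ (i + 1) * (∮ z in C(0, ℓ), (z - b)⁻¹) := by
      intro ℓ hℓ0 h1 h2 h3 h4
      have hIa : CircleIntegrable (fun z => a ^ (i + 1) * (z - a)⁻¹) 0 ℓ := by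
        apply ContinuousOn.circleIntegrable hℓ0.le
        refine ContinuousOn.mul continuousOn_const (ContinuousOn.inv₀ (by fun_prop) ?_)
        intro z hz
        rw [mem_sphere_zero_iff_norm] at hz
        exact sub_ne_zero.2 fun h => h3 (by rw [h] at hz; exact hz.symm)
      have hIb : CircleIntegrable (fun z => b ^ (i + 1) * (z - b)⁻¹) 0 ℓ := by
        apply ContinuousOn.circleIntegrable hℓ0.le
        refine ContinuousOn.mul continuousOn_const (ContinuousOn.inv₀ (by fun_prop) ?_)
        intro z hz
        rw [mem_sphere_zero_iff_norm] at hz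
        exact sub_ne_zero.2 fun h => h4 (by rw [h] at hz; exact hz.symm)
      have hIw : CircleIntegrable (fun z => z ^ i * w z) 0 ℓ := by
        apply ContinuousOn.circleIntegrable hℓ0.le
        exact (by fun_prop : ContinuousOn (fun z : ℂ => z ^ i) (sphere (0:ℂ) ℓ)).mul
          (hcont ℓ h1 h2 h3 h4)
      have hca : (∮ z in C(0, ℓ), a ^ (i + 1) * (z - a)⁻¹)
          = a ^ (i + 1) * ∮ z in C(0, ℓ), (z - a)⁻¹ := by
        simpa [smul_eq_mul] using
          circleIntegral.integral_smul (a ^ (i + 1) : ℂ) (fun z => (z - a)⁻¹) 0 ℓ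
      have hcb : (∮ z in C(0, ℓ), b ^ (i + 1) * (z - b)⁻¹)
          = b ^ (i + 1) * ∮ z in C(0, ℓ), (z - b)⁻¹ := by
        simpa [smul_eq_mul] using
          circleIntegral.integral_smul (b ^ (i + 1) : ℂ) (fun z => (z - b)⁻¹) 0 ℓ
      have hIab : CircleIntegrable
          (fun z => a ^ (i + 1) * (z - a)⁻¹ - b ^ (i + 1) * (z - b)⁻¹) 0 ℓ := by
        have h5 := hIa.add hIb.neg
        simpa [sub_eq_add_neg, Pi.add_def, Pi.neg_def] using h5
      have hGint : (∮ z in C(0, ℓ), G z) = ∮ z in C(0, ℓ),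
          (z ^ i * w z - (a ^ (i + 1) * (z - a)⁻¹ - b ^ (i + 1) * (z - b)⁻¹)) := by
        rw [hGdef]
        refine circleIntegral.integral_congr hℓ0.le fun z _ => by ring
      rw [hGint, circleIntegral.integral_sub hIw hIab,
        circleIntegral.integral_sub hIa hIb, hca, hcb]
      ring
    -- values of the principal part integrals
    have hvala_i : (∮ z in C(0, ρi), (z - a)⁻¹) = 2 * Real.pi * Complex.I := by
      apply circleIntegral.integral_sub_inv_of_mem_ball
      rw [mem_ball_zero_iff]
      show ‖a‖ < ρi
      linarith
    have hvalb_i : (∮ z in C(0, ρi), (z - b)⁻¹) = 2 * Real.pi * Complex.I := by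
      apply circleIntegral.integral_sub_inv_of_mem_ball
      rw [mem_ball_zero_iff]
      show ‖b‖ < ρi
      linarith
    have hvala_2 : (∮ z in C(0, ρ2), (z - a)⁻¹) = 0 :=
      circleIntegral_inv_of_outside hρ2pos.le (by linarith)
    have hvalb_2 : (∮ z in C(0, ρ2), (z - b)⁻¹) = 0 :=
      circleIntegral_inv_of_outside hρ2pos.le (by linarith)
    -- the key identity between the two contour integrals of z^i w z
    have hE1 : J - 2 * Real.pi * Complex.I * a ^ (i + 1)
        + 2 * Real.pi * Complex.I * b ^ (i + 1) = ∮ z in C(0, ρ2), z ^ i * w z := by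
      have e1 := hGG2 ρi hρipos.le hρi_facts.2.2.1 hρi_facts.2.2.2
      have e2 := hGG2 ρ2 hρ2pos.le hρ2_facts.2.2.1 hρ2_facts.2.2.2
      have e3 := hsplit ρi hρipos hρi_facts.1 hρi_facts.2.1 hρi_facts.2.2.1 hρi_facts.2.2.2
      have e4 := hsplit ρ2 hρ2pos hρ2_facts.1 hρ2_facts.2.1 hρ2_facts.2.2.1 hρ2_facts.2.2.2
      rw [e1, e2, e3, e4, hvala_i, hvalb_i, hvala_2, hvalb_2] at hann
      rw [← hJdef] at hann
      linear_combination hann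
    -- rotation by q² and periodicity
    have hrot : (∮ z in C(0, ρ2), z ^ i * w z) = q ^ (2 * i + 2) * J := by
      have h1 : ρ2 = ‖(q ^ 2)‖ * ρi := by
        rw [norm_pow]
      rw [h1, circleIntegral_rotate (fun z => z ^ i * w z) ρi (q ^ 2)]
      have h2 : (∮ z in C(0, ρi), (q ^ 2 * z) ^ i * w (q ^ 2 * z))
          = ∮ z in C(0, ρi), (q ^ (2 * i) : ℂ) • (z ^ i * w z) := by
        refine circleIntegral.integral_congr hρipos.le fun z hz => ?_
        rw [mem_sphere_zero_iff_norm] at hz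
        have hz0 : z ≠ 0 := by
          intro h
          rw [h] at hz
          simp only [norm_zero] at hz
          linarith
        rw [hperiod z hz0, smul_eq_mul, mul_pow, ← pow_mul]
        ring
      rw [h2, circleIntegral.integral_smul, smul_eq_mul, ← hJdef]
      ring
    have hden : (1 : ℂ) - q ^ (2 * i + 2) ≠ 0 := by
      intro h
      have h1 : q ^ (2 * i + 2) = 1 := by linear_combination -h
      have h2 : ‖q ^ (2 * i + 2)‖ = 1 := by rw [h1, norm_one]
      rw [norm_pow] at h2
      have h3 : ‖q‖ ^ (2 * i + 2) < 1 := pow_lt_one₀ hr0.le hr1 (by omega)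
      rw [h2] at h3
      exact lt_irrefl _ h3
    have hJval : J = 2 * Real.pi * Complex.I * (a ^ (i + 1) - b ^ (i + 1))
        / (1 - q ^ (2 * i + 2)) := by
      rw [hrot] at hE1
      field_simp
      linear_combination hE1
    rw [hJval]
    -- final algebraic identification
    have e1 : a ^ ((i : ℤ) + 1) = a ^ (i + 1) := by
      rw [show ((i : ℤ) + 1) = ((i + 1 : ℕ) : ℤ) by push_cast; ring, zpow_natCast]
    have e2 : q ^ (2 * (i : ℤ) + 2) = q ^ (2 * i + 2) := by
      rw [show (2 * (i : ℤ) + 2) = ((2 * i + 2 : ℕ) : ℤ) by push_cast; ring, zpow_natCast]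
    have e3 : a ^ (-(i : ℤ) - 1) = (a ^ (i + 1))⁻¹ := by
      rw [show (-(i : ℤ) - 1) = -((i + 1 : ℕ) : ℤ) by push_cast; ring, zpow_neg, zpow_natCast]
    have e4 : q ^ (2 * ((i : ℤ) + 1)) = q ^ (2 * i + 2) := by
      rw [show (2 * ((i : ℤ) + 1)) = ((2 * i + 2 : ℕ) : ℤ) by push_cast; ring, zpow_natCast]
    rw [e1, e2, e3, e4]
    have hbpow : b ^ (i + 1) = q ^ (2 * i + 2) * (a ^ (i + 1))⁻¹ := by
      rw [hb, div_pow, ← pow_mul, show 2 * (i + 1) = 2 * i + 2 by ring, div_eq_mul_inv]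
    rw [hbpow]
    rw [mul_div_assoc, ← mul_assoc, inv_mul_cancel₀ h2πI, one_mul]
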